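/- Let N = p^n M with p prime not dividing M and n ≥ 2, and let 1 ≤ r ≤ n. Define the operator S_{p^n,r} on S_{2k}(Γ_0(N)) by S_{p^n,r}(f) = f + Σ_{j=r}^{n-1} Σ_{s ∈ (Z/p^{n-j}Z)^*} f|_{2k} A_{s,j}, where A_{s,j} = [[a_{s,j}, b_{s,j}],[p^j M, p^{n-j} − sM]] ∈ SL_2(Z). Then S_{p^n,r} maps S_{2k}(Γ_0(N)) into S_{2k}(Γ_0(p^r M)), it satisfies S_{p^n,r}(S_{p^n,r} − p^{n-r}) = 0, and its p^{n-r}-eigenspace is exactly the subspace S_{2k}(Γ_0(p^r M)) (on which it acts as multiplication by p^{n-r}). -/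

import Mathlib

open Complex Filter

/-- The upper half plane, as a subset of `ℂ`. -/
def UHP : Set ℂ := {z : ℂ | 0 < z.im}

/-- The weight-`2k` slash operator for an integer matrix `[[a,b],[c,d]]` of
positive determinant: `(f ∣[2k] g)(z) = det(g)^k (cz+d)^{-2k} f((az+b)/(cz+d))`. -/
noncomputable def slash2k (k : ℕ) (a b c d : ℤ) (f : ℂ → ℂ) : ℂ → ℂ :=
  fun z => ((a * d - b * c : ℤ) : ℂ) ^ k * ((c : ℂ) * z + d) ^ (-(2 * k : ℤ)) *
    f (((a : ℂ) * z + b) / ((c : ℂ) * z + d))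

/-- `f : ℂ → ℂ` (restricted to the upper half plane) is a cusp form of weight
`2k` for `Γ₀(N)`: holomorphic on `ℍ`, slash-invariant under `Γ₀(N)`, and
vanishing at all cusps. -/
structure IsCuspForm (N k : ℕ) (f : ℂ → ℂ) : Prop where
  holo : DifferentiableOn ℂ f UHP
  slash_inv : ∀ a b c d : ℤ, a * d - b * c = 1 → (N : ℤ) ∣ c →
    ∀ z ∈ UHP, f (((a : ℂ) * z + b) / ((c : ℂ) * z + d)) =
      ((c : ℂ) * z + d) ^ (2 * k) * f z
  zero_at_cusps : ∀ a b c d : ℤ, a * d - b * c = 1 →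
    Tendsto (fun y : ℝ => slash2k k a b c d f (y * Complex.I)) atTop (nhds 0)

/-- `Ũ_p(f)(z) = p^{-k} Σ_{s=0}^{p-1} f((z+s)/p)`. -/
noncomputable def Utilde (p k : ℕ) (f : ℂ → ℂ) : ℂ → ℂ :=
  fun z => ((p : ℂ) ^ k)⁻¹ * ∑ s ∈ Finset.range p, f ((z + s) / p)

/-- The operator `S_{pⁿ,r}`:
`S_{pⁿ,r}(f) = f + Σ_{j=r}^{n-1} Σ_{s ∈ (ℤ/p^{n-j}ℤ)^*} f ∣[2k] A_{s,j}`, where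
`A_{s,j} = [[a_{s,j}, b_{s,j}],[p^j M, p^{n-j} - sM]] ∈ SL₂(ℤ)` and
`A j s = (a_{s,j}, b_{s,j})` records the chosen top rows. -/
noncomputable def Sop (p n M k r : ℕ) (A : ℕ → ℕ → ℤ × ℤ) (f : ℂ → ℂ) : ℂ → ℂ :=
  fun z => f z + ∑ j ∈ Finset.Icc r (n - 1),
    ∑ s ∈ (Finset.range (p ^ (n - j))).filter (fun s => ¬ p ∣ s),
      slash2k k (A j s).1 (A j s).2 ((p : ℤ) ^ j * M) ((p : ℤ) ^ (n - j) - s * M) f z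

lemma denom_ne {a b c d : ℤ} (h : a * d - b * c = 1) {z : ℂ} (hz : 0 < z.im) :
    (c : ℂ) * z + d ≠ 0 := by
  intro h0
  rcases eq_or_ne c 0 with hc | hc
  · subst hc
    have : (d:ℂ) = 0 := by simpa using h0
    have hd : d = 0 := by exact_mod_cast this
    subst hd
    simp at h
  · have him : ((c:ℂ) * z + d).im = (c:ℝ) * z.im := by simp
    rw [h0] at him
    have : (c:ℝ) = 0 := by
      have hz' : z.im ≠ 0 := ne_of_gt hz
      rcases mul_eq_zero.mp him.symm with h' | h'
      · exact h'
      · exact absurd h' hz'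
    exact hc (by exact_mod_cast this)

lemma mobius_im {a b c d : ℤ} (h : a * d - b * c = 1) {z : ℂ} (hz : 0 < z.im) :
    0 < ((((a : ℂ) * z + b) / ((c : ℂ) * z + d))).im := by
  have hd := denom_ne h hz
  have key : ((((a : ℂ) * z + b) / ((c : ℂ) * z + d))).im
      = z.im / Complex.normSq ((c:ℂ)*z + d) := by
    rw [Complex.div_im]
    have h1 : ((a:ℂ) * z + b).im = (a:ℝ) * z.im := by simp
    have h2 : ((a:ℂ) * z + b).re = (a:ℝ) * z.re + b := by simp
    have h3 : ((c:ℂ) * z + d).im = (c:ℝ) * z.im := by simp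
    have h4 : ((c:ℂ) * z + d).re = (c:ℝ) * z.re + d := by simp
    rw [h1, h2, h3, h4]
    have hdet : (a:ℝ) * d - b * c = 1 := by exact_mod_cast h
    have hnum : (a:ℝ) * z.im * ((c:ℝ) * z.re + d) - ((a:ℝ) * z.re + b) * ((c:ℝ) * z.im)
        = z.im := by linear_combination z.im * hdet
    rw [div_sub_div_same, hnum]
  rw [key]
  exact div_pos hz (Complex.normSq_pos.mpr hd)

lemma mobius_mem {a b c d : ℤ} (h : a * d - b * c = 1) {z : ℂ} (hz : z ∈ UHP) :
    (((a : ℂ) * z + b) / ((c : ℂ) * z + d)) ∈ UHP := mobius_im h hz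

/-- Cocycle: outer slash by `g = (a,b,c,d)`, inner by `g' = (a',b',c',d')`,
equals slash by the product `g' * g`. -/
lemma slash_slash (f : ℂ → ℂ) (k : ℕ) {a b c d a' b' c' d' : ℤ}
    (h : a * d - b * c = 1) (h' : a' * d' - b' * c' = 1) {z : ℂ} (hz : 0 < z.im) :
    slash2k k a b c d (slash2k k a' b' c' d' f) z
      = slash2k k (a'*a + b'*c) (a'*b + b'*d) (c'*a + d'*c) (c'*b + d'*d) f z := by
  have hdet2 : (a'*a + b'*c) * (c'*b + d'*d) - (a'*b + b'*d) * (c'*a + d'*c) = 1 := by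
    have : (a'*a + b'*c) * (c'*b + d'*d) - (a'*b + b'*d) * (c'*a + d'*c)
        = (a*d - b*c) * (a'*d' - b'*c') := by ring
    rw [this, h, h']; ring
  have hu : (c : ℂ) * z + d ≠ 0 := denom_ne h hz
  have hu2 : ((c'*a + d'*c : ℤ) : ℂ) * z + ((c'*b + d'*d : ℤ) : ℂ) ≠ 0 := denom_ne hdet2 hz
  set w : ℂ := ((a:ℂ) * z + b) / ((c:ℂ) * z + d) with hw
  have hkey : (c':ℂ) * w + d' = (((c'*a + d'*c : ℤ):ℂ) * z + ((c'*b + d'*d : ℤ):ℂ)) /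
      ((c:ℂ)*z + d) := by
    rw [hw]; push_cast; field_simp; rw [div_add' _ _ _ (by rw [mul_comm]; exact hu)]; ring
  have hden' : (c':ℂ) * w + d' ≠ 0 := by
    rw [hkey]; exact div_ne_zero hu2 hu
  have harg : ((a':ℂ) * w + b') / ((c':ℂ) * w + d')
      = (((a'*a + b'*c : ℤ):ℂ) * z + ((a'*b + b'*d : ℤ):ℂ)) /
        (((c'*a + d'*c : ℤ):ℂ) * z + ((c'*b + d'*d : ℤ):ℂ)) := by
    have hnum : (a':ℂ) * w + b' = (((a'*a + b'*c : ℤ):ℂ) * z + ((a'*b + b'*d : ℤ):ℂ)) /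
        ((c:ℂ)*z + d) := by
      rw [hw]; push_cast; field_simp; rw [div_add' _ _ _ (by rw [mul_comm]; exact hu)]; ring
    rw [hnum, hkey]
    rw [div_div_div_eq]
    rw [mul_comm (((a'*a + b'*c : ℤ):ℂ) * z + ((a'*b + b'*d : ℤ):ℂ)) ((c:ℂ)*z + d)]
    rw [mul_div_mul_left _ _ hu]
  have hzp : ((c:ℂ)*z + d) ^ (-(2 * k : ℤ)) *
      ((((c'*a + d'*c : ℤ):ℂ) * z + ((c'*b + d'*d : ℤ):ℂ)) / ((c:ℂ)*z + d)) ^ (-(2 * k : ℤ))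
      = (((c'*a + d'*c : ℤ):ℂ) * z + ((c'*b + d'*d : ℤ):ℂ)) ^ (-(2 * k : ℤ)) := by
    rw [div_zpow]
    rw [div_eq_mul_inv, ← mul_assoc, mul_comm (((c:ℂ)*z + d) ^ (-(2 * k : ℤ)))]
    rw [mul_assoc]
    rw [mul_inv_cancel₀ (zpow_ne_zero _ hu), mul_one]
  simp only [slash2k, h, h', hdet2, Int.cast_one, one_pow, one_mul]
  rw [harg, hkey, ← mul_assoc, hzp]

/-- slash by an element of `Γ₀(N)` acts trivially on `UHP`. -/
lemma slash_gamma {N k : ℕ} {f : ℂ → ℂ} (hf : IsCuspForm N k f) {a b c d : ℤ}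
    (h : a * d - b * c = 1) (hc : (N : ℤ) ∣ c) {z : ℂ} (hz : z ∈ UHP) :
    slash2k k a b c d f z = f z := by
  have hu : (c : ℂ) * z + d ≠ 0 := denom_ne h hz
  rw [slash2k]
  simp only [h, Int.cast_one, one_pow, one_mul]
  rw [hf.slash_inv a b c d h hc z hz, ← mul_assoc]
  have : ((c:ℂ) * z + d) ^ (-(2 * k : ℤ)) * ((c:ℂ) * z + d) ^ (2 * k) = 1 := by
    rw [zpow_neg, ← zpow_natCast ((c:ℂ)*z+d) (2*k)]
    exact inv_mul_cancel₀ (zpow_ne_zero _ hu)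
  rw [this, one_mul]

/-- If two `SL₂(ℤ)` matrices are in the same coset of `Γ₀(N)` (detected by the
cross product of bottom rows), slashing a level-`N` cusp form gives the same
result on `UHP`. -/
lemma slash_coset {N k : ℕ} {f : ℂ → ℂ} (hf : IsCuspForm N k f) {a b c d a' b' c' d' : ℤ}
    (h : a * d - b * c = 1) (h' : a' * d' - b' * c' = 1)
    (hcross : (N : ℤ) ∣ (c * d' - d * c')) {z : ℂ} (hz : z ∈ UHP) :
    slash2k k a b c d f z = slash2k k a' b' c' d' f z := by
  set α := a * d' - b * c' with hα
  set β := b * a' - a * b' with hβ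
  set γ := c * d' - d * c' with hγ
  set δ := d * a' - c * b' with hδ
  have hdet : α * δ - β * γ = 1 := by
    have : α * δ - β * γ = (a * d - b * c) * (a' * d' - b' * c') := by
      rw [hα, hβ, hγ, hδ]; ring
    rw [this, h, h']; ring
  -- (α β; γ δ) * (a' b'; c' d') = (a b; c d)
  have e1 : α * a' + β * c' = a := by rw [hα, hβ]; linear_combination a * h'
  have e2 : α * b' + β * d' = b := by rw [hα, hβ]; linear_combination b * h'
  have e3 : γ * a' + δ * c' = c := by rw [hγ, hδ]; linear_combination c * h'
  have e4 : γ * b' + δ * d' = d := by rw [hγ, hδ]; linear_combination d * h'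
  have hcc := slash_slash f k (a := a') (b := b') (c := c') (d := d')
    (a' := α) (b' := β) (c' := γ) (d' := δ) h' hdet (z := z) hz
  rw [e1, e2, e3, e4] at hcc
  rw [← hcc]
  -- now `slash2k a' b' c' d' (slash2k α β γ δ f) z = slash2k a' b' c' d' f z`
  have hw : (((a':ℂ) * z + b') / ((c':ℂ) * z + d')) ∈ UHP := mobius_mem h' hz
  simp only [slash2k]
  rw [show ((α * δ - β * γ : ℤ) : ℂ) ^ k * (((γ:ℤ):ℂ) * (((a':ℂ) * z + b') / ((c':ℂ) * z + d')) + ((δ:ℤ):ℂ)) ^ (-(2 * k : ℤ)) *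
      f ((((α:ℤ):ℂ) * (((a':ℂ) * z + b') / ((c':ℂ) * z + d')) + ((β:ℤ):ℂ)) / (((γ:ℤ):ℂ) * (((a':ℂ) * z + b') / ((c':ℂ) * z + d')) + ((δ:ℤ):ℂ)))
      = f (((a':ℂ) * z + b') / ((c':ℂ) * z + d')) from slash_gamma hf hdet hcross hw]

def Sset (p n j : ℕ) : Finset ℕ :=
  if j = n then {0} else (Finset.range (p ^ (n - j))).filter (fun s => ¬ p ∣ s)

def idxS (p n r : ℕ) : Finset ((_ : ℕ) × ℕ) := (Finset.Icc r n).sigma (fun j => Sset p n j)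

lemma mem_idxS {p n r : ℕ} {x : (_ : ℕ) × ℕ} :
    x ∈ idxS p n r ↔ r ≤ x.1 ∧ x.1 ≤ n ∧
      ((x.1 = n ∧ x.2 = 0) ∨ (x.1 < n ∧ x.2 < p ^ (n - x.1) ∧ ¬ p ∣ x.2)) := by
  obtain ⟨j, s⟩ := x
  simp only [idxS, Finset.mem_sigma, Finset.mem_Icc, Sset]
  constructor
  · rintro ⟨⟨h1, h2⟩, hs⟩
    refine ⟨h1, h2, ?_⟩
    by_cases hj : j = n
    · left; rw [if_pos hj] at hs; simp at hs; exact ⟨hj, hs⟩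
    · right; rw [if_neg hj] at hs; simp at hs
      exact ⟨lt_of_le_of_ne h2 hj, hs.1, hs.2⟩
  · rintro ⟨h1, h2, h3⟩
    refine ⟨⟨h1, h2⟩, ?_⟩
    rcases h3 with ⟨hj, hs⟩ | ⟨hj, hs1, hs2⟩
    · rw [if_pos hj]; simp [hs]
    · rw [if_neg (Nat.ne_of_lt hj)]; simp [hs1, hs2]

section Arith
set_option linter.unusedSectionVars false

variable {p n M r : ℕ} (hp : p.Prime) (hpM : ¬ p ∣ M) (hM : 0 < M)
  (hn : 2 ≤ n) (hr1 : 1 ≤ r) (hr2 : r ≤ n)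

include hp hpM hM hn hr1 hr2

lemma primeZ : Prime (p : ℤ) := by rw [Int.prime_iff_natAbs_prime]; simpa

lemma copZ : IsCoprime (p : ℤ) (M : ℤ) :=
  Nat.isCoprime_iff_coprime.mpr (hp.coprime_iff_not_dvd.mpr hpM)

/-- distinct indices have non-congruent bottom rows mod `pⁿM`. -/
lemma distinct_cross {x y : (_ : ℕ) × ℕ} (hx : x ∈ idxS p n r) (hy : y ∈ idxS p n r)
    (h : ((p:ℤ)^n * M) ∣ ((p:ℤ)^x.1 * M) * ((p:ℤ)^(n - y.1) - y.2 * M)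
      - ((p:ℤ)^y.1 * M) * ((p:ℤ)^(n - x.1) - x.2 * M)) : x = y := by
  have hpZ : Prime (p:ℤ) := primeZ hp hpM hM hn hr1 hr2
  have hp1 : 1 < p := hp.one_lt
  obtain ⟨j₁, s₁⟩ := x
  obtain ⟨j₂, s₂⟩ := y
  rw [mem_idxS] at hx hy
  obtain ⟨hj₁r, hj₁n, hx3⟩ := hx
  obtain ⟨hj₂r, hj₂n, hy3⟩ := hy
  -- cancel M
  have hW : (p:ℤ)^n ∣ (p:ℤ)^j₁ * ((p:ℤ)^(n - j₂) - s₂ * M) -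
      (p:ℤ)^j₂ * ((p:ℤ)^(n - j₁) - s₁ * M) := by
    have hM0 : (M:ℤ) ≠ 0 := by exact_mod_cast hM.ne'
    rw [← mul_dvd_mul_iff_left hM0]
    have e : (M:ℤ) * ((p:ℤ)^j₁ * ((p:ℤ)^(n - j₂) - s₂ * M) -
        (p:ℤ)^j₂ * ((p:ℤ)^(n - j₁) - s₁ * M))
        = ((p:ℤ)^j₁ * M) * ((p:ℤ)^(n - j₂) - s₂ * M)
          - ((p:ℤ)^j₂ * M) * ((p:ℤ)^(n - j₁) - s₁ * M) := by ring
    rw [e]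
    have h' := h
    rwa [show (p:ℤ)^n * M = M * (p:ℤ)^n from mul_comm _ _] at h'
  simp only at hW hx3 hy3 hj₁r hj₁n hj₂r hj₂n ⊢
  have hp0 : (p:ℤ) ≠ 0 := by exact_mod_cast hp.pos.ne'
  have hp1 : 1 < p := hp.one_lt
  have no_lt : ∀ (a₁ b₁ a₂ b₂ : ℕ), a₁ < n → ¬ p ∣ b₁ → a₂ ≤ n →
      ((a₂ = n ∧ b₂ = 0) ∨ (a₂ < n ∧ ¬ p ∣ b₂)) → a₁ < a₂ →
      ¬ (p:ℤ)^n ∣ (p:ℤ)^a₁ * ((p:ℤ)^(n - a₂) - b₂ * M)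
        - (p:ℤ)^a₂ * ((p:ℤ)^(n - a₁) - b₁ * M) := by
    intro a₁ b₁ a₂ b₂ ha₁ hb₁ ha₂ hcase hlt hdvd
    rcases hcase with ⟨ha₂n, rfl⟩ | ⟨ha₂n, hb₂⟩
    · rw [ha₂n] at hdvd
      have hdd : (p:ℤ)^n ∣ (p:ℤ)^a₁ := by
        have e : (p:ℤ)^a₁ = ((p:ℤ)^a₁ * ((p:ℤ)^(n - n) - (0:ℕ) * M)
            - (p:ℤ)^n * ((p:ℤ)^(n - a₁) - b₁ * M))
            + (p:ℤ)^n * ((p:ℤ)^(n - a₁) - b₁ * M) := by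
          simp [Nat.sub_self]
        rw [e]
        exact dvd_add hdvd (Dvd.intro _ rfl)
      have hdd' : p^n ∣ p^a₁ := by exact_mod_cast hdd
      exact absurd ((Nat.pow_dvd_pow_iff_le_right hp1).mp hdd') (by omega)
    · have h1 : (p:ℤ)^(a₁+1) ∣ (p:ℤ)^n := pow_dvd_pow _ (by omega)
      have e1 : (p:ℤ)^a₁ * (p:ℤ)^(n-a₂) = (p:ℤ)^(a₁+1) * (p:ℤ)^(n-a₂-1) := by
        rw [← pow_add, ← pow_add]; congr 1; omega
      have e2 : (p:ℤ)^a₂ = (p:ℤ)^(a₁+1) * (p:ℤ)^(a₂-(a₁+1)) := by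
        rw [← pow_add]; congr 1; omega
      have h2 : (p:ℤ)^(a₁+1) ∣ (b₂:ℤ) * M * (p:ℤ)^a₁ := by
        have e : (b₂:ℤ) * M * (p:ℤ)^a₁ = ((p:ℤ)^a₁ * (p:ℤ)^(n-a₂)
            - ((p:ℤ)^a₁ * ((p:ℤ)^(n - a₂) - b₂ * M)
              - (p:ℤ)^a₂ * ((p:ℤ)^(n - a₁) - b₁ * M)))
            - (p:ℤ)^a₂ * ((p:ℤ)^(n - a₁) - b₁ * M) := by ring
        rw [e]
        refine dvd_sub (dvd_sub ?_ (h1.trans hdvd)) ?_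
        · rw [e1]; exact dvd_mul_right _ _
        · exact (e2 ▸ dvd_mul_right ((p:ℤ)^(a₁+1)) ((p:ℤ)^(a₂-(a₁+1)))).mul_right _
      have e3 : (b₂:ℤ) * M * (p:ℤ)^a₁ = (p:ℤ)^a₁ * ((b₂:ℤ) * M) := by ring
      have e4 : (p:ℤ)^(a₁+1) = (p:ℤ)^a₁ * p := pow_succ _ _
      rw [e3, e4] at h2
      have h5 : (p:ℤ) ∣ (b₂:ℤ) * M := (mul_dvd_mul_iff_left (pow_ne_zero _ hp0)).mp h2
      have hpZ : Prime (p:ℤ) := by rw [Int.prime_iff_natAbs_prime]; simpa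
      rcases hpZ.dvd_mul.mp h5 with h6 | h6
      · exact hb₂ (by exact_mod_cast h6)
      · exact hpM (by exact_mod_cast h6)
  have hjeq : j₁ = j₂ := by
    by_contra hne
    rcases Nat.lt_or_ge j₁ j₂ with hlt | hge
    · have hj₁lt : j₁ < n := by omega
      have hs₁ : ¬ p ∣ s₁ := by
        rcases hx3 with ⟨h', _⟩ | ⟨_, _, h'⟩
        · omega
        · exact h'
      exact no_lt j₁ s₁ j₂ s₂ hj₁lt hs₁ hj₂n
        (by rcases hy3 with ⟨h', h''⟩ | ⟨h', h'', h'''⟩ <;> [left; right] <;> tauto) hlt hW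
    · have hlt : j₂ < j₁ := by omega
      have hj₂lt : j₂ < n := by omega
      have hs₂ : ¬ p ∣ s₂ := by
        rcases hy3 with ⟨h', _⟩ | ⟨_, _, h'⟩
        · omega
        · exact h'
      have hW' : (p:ℤ)^n ∣ (p:ℤ)^j₂ * ((p:ℤ)^(n - j₁) - s₁ * M)
          - (p:ℤ)^j₁ * ((p:ℤ)^(n - j₂) - s₂ * M) := by
        have := dvd_neg.mpr hW
        exact this.trans (dvd_of_eq (by ring))
      exact no_lt j₂ s₂ j₁ s₁ hj₂lt hs₂ hj₁n
        (by rcases hx3 with ⟨h', h''⟩ | ⟨h', h'', h'''⟩ <;> [left; right] <;> tauto) hlt hW'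
  subst hjeq
  have hseq : s₁ = s₂ := by
    rcases hx3 with ⟨hjn, hs₁0⟩ | ⟨hjn, hs₁lt, hs₁p⟩
    · rcases hy3 with ⟨_, hs₂0⟩ | ⟨h', _, _⟩
      · omega
      · omega
    · rcases hy3 with ⟨h', _⟩ | ⟨_, hs₂lt, hs₂p⟩
      · omega
      have hWe : (p:ℤ)^j₁ * ((p:ℤ)^(n - j₁) - s₂ * M)
          - (p:ℤ)^j₁ * ((p:ℤ)^(n - j₁) - s₁ * M) = (p:ℤ)^j₁ * ((M:ℤ) * ((s₁:ℤ) - s₂)) := by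
        ring
      rw [hWe] at hW
      have hsplit : (p:ℤ)^n = (p:ℤ)^j₁ * (p:ℤ)^(n-j₁) := by
        rw [← pow_add]; congr 1; omega
      rw [hsplit] at hW
      have h7 : (p:ℤ)^(n-j₁) ∣ (M:ℤ) * ((s₁:ℤ) - s₂) :=
        (mul_dvd_mul_iff_left (pow_ne_zero _ hp0)).mp hW
      have hcop : IsCoprime ((p:ℤ)^(n-j₁)) (M:ℤ) :=
        (Nat.isCoprime_iff_coprime.mpr (hp.coprime_iff_not_dvd.mpr hpM)).pow_left
      have h8 : (p:ℤ)^(n-j₁) ∣ ((s₁:ℤ) - s₂) := hcop.dvd_of_dvd_mul_left h7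
      have h9 : ((s₁:ℤ) - s₂) = 0 := by
        refine Int.eq_zero_of_abs_lt_dvd h8 ?_
        rw [abs_sub_lt_iff]
        have b1 : (s₁:ℤ) < (p:ℤ)^(n-j₁) := by exact_mod_cast Nat.cast_lt.mpr hs₁lt
        have b2 : (s₂:ℤ) < (p:ℤ)^(n-j₁) := by exact_mod_cast Nat.cast_lt.mpr hs₂lt
        constructor <;> [skip; skip] <;> omega
      omega
  subst hseq
  rfl

lemma key_exists {c d : ℤ} (hc : ((p:ℤ)^r * M) ∣ c) (hcop : ∃ u v : ℤ, u * c + v * d = 1) :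
    ∃ x, x ∈ idxS p n r ∧ ((p:ℤ)^n * M) ∣
      ((p:ℤ)^x.1 * M) * d - ((p:ℤ)^(n - x.1) - x.2 * M) * c := by
  obtain ⟨u, v, huv⟩ := hcop
  have hpZ : Prime (p:ℤ) := primeZ hp hpM hM hn hr1 hr2
  have hp0 : (p:ℤ) ≠ 0 := hpZ.ne_zero
  have hcopPM : IsCoprime (p:ℤ) (M:ℤ) := copZ hp hpM hM hn hr1 hr2
  have hMc : (M:ℤ) ∣ c := (Dvd.intro_left ((p:ℤ)^r) rfl).trans hc
  have hrP : (p:ℤ)^r ∣ c := (Dvd.intro (M:ℤ) rfl).trans hc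
  classical
  set j := Nat.findGreatest (fun j => (p:ℤ)^j ∣ c) n with hj
  have hj1 : (p:ℤ)^j ∣ c :=
    Nat.findGreatest_spec (P := fun j => (p:ℤ)^j ∣ c) hr2 hrP
  have hjr : r ≤ j := Nat.le_findGreatest (P := fun j => (p:ℤ)^j ∣ c) hr2 hrP
  have hjn : j ≤ n := Nat.findGreatest_le n
  rcases eq_or_lt_of_le hjn with hjeq | hjlt
  · -- j = n : identity coset
    refine ⟨⟨n, 0⟩, ?_, ?_⟩
    · rw [mem_idxS]; exact ⟨hr2, le_refl n, Or.inl ⟨rfl, rfl⟩⟩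
    · have hpn : (p:ℤ)^n ∣ c := by rw [← hjeq]; exact hj1
      have hc' : (p:ℤ)^n * M ∣ c := (hcopPM.pow_left).mul_dvd hpn hMc
      have e : ((p:ℤ)^(⟨n,0⟩ : (_ : ℕ) × ℕ).1 * M) * d
          - ((p:ℤ)^(n - (⟨n,0⟩ : (_ : ℕ) × ℕ).1) - ((⟨n,0⟩ : (_ : ℕ) × ℕ).2 : ℤ) * M) * c
          = ((p:ℤ)^n * M) * d - c := by
        simp [Nat.sub_self]
      rw [e]
      exact dvd_sub (dvd_mul_right _ _) hc'
  · -- j < n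
    have hj2 : ¬ (p:ℤ)^(j+1) ∣ c :=
      Nat.findGreatest_is_greatest (P := fun j => (p:ℤ)^j ∣ c) (n := n) (by omega) (by omega)
    obtain ⟨c₁, hc₁⟩ := hj1
    have hpc₁ : ¬ (p:ℤ) ∣ c₁ := by
      intro hd
      exact hj2 (by rw [hc₁, pow_succ]; exact mul_dvd_mul_left _ hd)
    have hMc₁ : (M:ℤ) ∣ c₁ := by
      have : (M:ℤ) ∣ (p:ℤ)^j * c₁ := by rw [← hc₁]; exact hMc
      exact ((hcopPM.pow_left).symm).dvd_of_dvd_mul_left this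
    obtain ⟨c₀, hc₀⟩ := hMc₁
    have hpc₀ : ¬ (p:ℤ) ∣ c₀ := fun hd => hpc₁ (by rw [hc₀]; exact hd.mul_left _)
    have hpd : ¬ (p:ℤ) ∣ d := by
      intro hd
      have hpc : (p:ℤ) ∣ c := by
        rw [hc₁]
        exact ((dvd_pow_self (p:ℤ) (by omega : j ≠ 0))).mul_right _
      have : (p:ℤ) ∣ 1 := by rw [← huv]; exact dvd_add (hpc.mul_left u) (hd.mul_left v)
      exact hpZ.not_dvd_one this
    have hcopS : IsCoprime ((p:ℤ)^(n-j)) ((M:ℤ) * c₀) :=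
      (hcopPM.mul_right ((hpZ.coprime_iff_not_dvd).mpr hpc₀)).pow_left
    obtain ⟨u', v', h'⟩ := hcopS
    have hq0 : (0:ℤ) < (p:ℤ)^(n-j) := by positivity
    set s0 : ℤ := (-d * v') % ((p:ℤ)^(n-j)) with hs0
    have hs0nn : 0 ≤ s0 := Int.emod_nonneg _ (ne_of_gt hq0)
    have hs0lt : s0 < (p:ℤ)^(n-j) := Int.emod_lt_of_pos _ hq0
    have he : s0 = -d * v' - (p:ℤ)^(n-j) * ((-d * v') / ((p:ℤ)^(n-j))) := by
      rw [hs0, Int.emod_def]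
    have hcong : (p:ℤ)^(n-j) ∣ d + s0 * ((M:ℤ) * c₀) := by
      refine ⟨d * u' - ((-d * v') / ((p:ℤ)^(n-j))) * ((M:ℤ) * c₀), ?_⟩
      linear_combination (M:ℤ) * c₀ * he - d * h'
    have hps0 : ¬ (p:ℤ) ∣ s0 := by
      intro hd
      apply hpd
      have h1 : (p:ℤ) ∣ d + s0 * ((M:ℤ) * c₀) :=
        (dvd_pow_self (p:ℤ) (by omega : n - j ≠ 0)).trans hcong
      have h2 : (p:ℤ) ∣ s0 * ((M:ℤ) * c₀) := hd.mul_right _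
      have := dvd_sub h1 h2
      simpa using this
    set s : ℕ := s0.toNat with hs
    have hscast : (s:ℤ) = s0 := Int.toNat_of_nonneg hs0nn
    refine ⟨⟨j, s⟩, ?_, ?_⟩
    · rw [mem_idxS]
      refine ⟨hjr, hjn, Or.inr ⟨hjlt, ?_, ?_⟩⟩
      · have : (s:ℤ) < ((p^(n-j) : ℕ) : ℤ) := by rw [hscast]; push_cast; exact hs0lt
        exact_mod_cast this
      · intro hd
        apply hps0
        rw [← hscast]
        exact_mod_cast (Int.natCast_dvd_natCast.mpr hd)
    · have hsplit : (p:ℤ)^n = (p:ℤ)^j * (p:ℤ)^(n-j) := by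
        rw [← pow_add]; congr 1; omega
      have hceq : c = (p:ℤ)^j * ((M:ℤ) * c₀) := by rw [hc₁, hc₀]
      have hGe : ((p:ℤ)^(⟨j,s⟩ : (_ : ℕ) × ℕ).1 * M) * d
          - ((p:ℤ)^(n - (⟨j,s⟩ : (_ : ℕ) × ℕ).1) - ((⟨j,s⟩ : (_ : ℕ) × ℕ).2 : ℤ) * M) * c
          = ((p:ℤ)^j * M) * (d + (s:ℤ) * ((M:ℤ) * c₀)) - ((p:ℤ)^n * M) * c₀ := by
        show ((p:ℤ)^j * M) * d - ((p:ℤ)^(n - j) - (s:ℤ) * M) * c = _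
        rw [hceq]
        linear_combination (M:ℤ) * c₀ * hsplit
      rw [hGe]
      refine dvd_sub ?_ (dvd_mul_right _ _)
      have e2 : (p:ℤ)^n * M = ((p:ℤ)^j * M) * (p:ℤ)^(n-j) := by rw [hsplit]; ring
      rw [e2]
      refine mul_dvd_mul_left _ ?_
      rw [hscast]
      exact hcong

lemma cross_unique {C D : ℤ} (hcop : ∃ u v : ℤ, u * C + v * D = 1) {x y : (_ : ℕ) × ℕ}
    (hx : x ∈ idxS p n r) (hy : y ∈ idxS p n r)
    (h1 : ((p:ℤ)^n * M) ∣ ((p:ℤ)^x.1 * M) * D - ((p:ℤ)^(n - x.1) - x.2 * M) * C)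
    (h2 : ((p:ℤ)^n * M) ∣ ((p:ℤ)^y.1 * M) * D - ((p:ℤ)^(n - y.1) - y.2 * M) * C) :
    x = y := by
  obtain ⟨u, v, huv⟩ := hcop
  set cx : ℤ := (p:ℤ)^x.1 * M
  set dx : ℤ := (p:ℤ)^(n - x.1) - x.2 * M
  set cy : ℤ := (p:ℤ)^y.1 * M
  set dy : ℤ := (p:ℤ)^(n - y.1) - y.2 * M
  have hXC : ((p:ℤ)^n * M) ∣ (cx * dy - cy * dx) * C := by
    have e : (cx * dy - cy * dx) * C = cy * (cx * D - dx * C) - cx * (cy * D - dy * C) := by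
      ring
    rw [e]
    exact dvd_sub (h1.mul_left cy) (h2.mul_left cx)
  have hXD : ((p:ℤ)^n * M) ∣ (cx * dy - cy * dx) * D := by
    have e : (cx * dy - cy * dx) * D = dy * (cx * D - dx * C) - dx * (cy * D - dy * C) := by
      ring
    rw [e]
    exact dvd_sub (h1.mul_left dy) (h2.mul_left dx)
  have hX : ((p:ℤ)^n * M) ∣ (cx * dy - cy * dx) := by
    have e : cx * dy - cy * dx = u * ((cx * dy - cy * dx) * C) + v * ((cx * dy - cy * dx) * D) := by
      linear_combination (cx * dy - cy * dx) * huv.symm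
    rw [e]
    exact dvd_add (hXC.mul_left u) (hXD.mul_left v)
  exact distinct_cross hp hpM hM hn hr1 hr2 hx hy hX

lemma count_sum : (1 : ℤ) + ∑ j ∈ Finset.Icc r (n-1),
    ((((Finset.range (p ^ (n - j))).filter (fun s => ¬ p ∣ s)).card : ℤ))
    = (p:ℤ)^(n-r) := by
  have hcard : ∀ j ∈ Finset.Icc r (n-1),
      (((Finset.range (p ^ (n - j))).filter (fun s => ¬ p ∣ s)).card : ℤ)
      = (p:ℤ)^(n-1-j) * ((p:ℤ) - 1) := by
    intro j hj
    rw [Finset.mem_Icc] at hj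
    have hnj : 0 < n - j := by omega
    have hfe : (Finset.range (p ^ (n - j))).filter (fun s => ¬ p ∣ s)
        = (Finset.range (p ^ (n - j))).filter ((p ^ (n-j)).Coprime) := by
      apply Finset.filter_congr
      intro s _
      rw [Nat.coprime_pow_left_iff hnj, hp.coprime_iff_not_dvd]
    rw [hfe]
    have : ((Finset.range (p ^ (n - j))).filter ((p ^ (n-j)).Coprime)).card
        = (p ^ (n-j)).totient := rfl
    rw [this, Nat.totient_prime_pow hp hnj]
    rw [show p ^ (n-j-1) * (p-1) = p ^ (n-1-j) * (p-1) from by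
      rw [show n-j-1 = n-1-j from by omega]]
    push_cast [Nat.cast_sub hp.one_le]
    ring
  rw [Finset.sum_congr rfl hcard]
  have hre : ∑ j ∈ Finset.Icc r (n-1), (p:ℤ)^(n-1-j) * ((p:ℤ)-1)
      = ∑ i ∈ Finset.range (n-r), (p:ℤ)^i * ((p:ℤ)-1) := by
    apply Finset.sum_nbij' (fun j => n-1-j) (fun i => n-1-i)
    · intro a ha; rw [Finset.mem_Icc] at ha; rw [Finset.mem_range]; omega
    · intro a ha; rw [Finset.mem_range] at ha; rw [Finset.mem_Icc]; omega
    · intro a ha; rw [Finset.mem_Icc] at ha; show n-1-(n-1-a) = a; omega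
    · intro a ha; rw [Finset.mem_range] at ha; show n-1-(n-1-a) = a; omega
    · intro a _; rfl
  rw [hre, ← Finset.sum_mul, geom_sum_mul]
  ring

end Arith

/-- chosen top row for the coset representative indexed by `x`. -/
def Atop (A : ℕ → ℕ → ℤ × ℤ) (n : ℕ) (x : (_ : ℕ) × ℕ) : ℤ × ℤ :=
  if x.1 = n then (1, 0) else A x.1 x.2

section Main

set_option linter.unusedSectionVars false

variable {p n M k r : ℕ} {A : ℕ → ℕ → ℤ × ℤ}
  (hp : p.Prime) (hpM : ¬ p ∣ M) (hM : 0 < M)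
  (hk : 1 ≤ k) (hn : 2 ≤ n) (hr1 : 1 ≤ r) (hr2 : r ≤ n)
  (hA : ∀ j s : ℕ, r ≤ j → j ≤ n - 1 → s < p ^ (n - j) → ¬ p ∣ s →
      (A j s).1 * ((p : ℤ) ^ (n - j) - s * M) - (A j s).2 * ((p : ℤ) ^ j * M) = 1)

include hp hpM hM hk hn hr1 hr2 hA

lemma detB {x : (_ : ℕ) × ℕ} (hx : x ∈ idxS p n r) :
    (Atop A n x).1 * ((p : ℤ) ^ (n - x.1) - x.2 * M)
      - (Atop A n x).2 * ((p : ℤ) ^ x.1 * M) = 1 := by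
  rw [mem_idxS] at hx
  obtain ⟨h1, h2, h3⟩ := hx
  rcases h3 with ⟨hjn, hs0⟩ | ⟨hjn, hslt, hsp⟩
  · rw [Atop, if_pos hjn, hjn, hs0]
    simp [Nat.sub_self]
  · rw [Atop, if_neg (Nat.ne_of_lt hjn)]
    exact hA x.1 x.2 h1 (by omega) hslt hsp

lemma Sop_eq_sum (f : ℂ → ℂ) (hf : IsCuspForm (p ^ n * M) k f) {z : ℂ} (hz : z ∈ UHP) :
    Sop p n M k r A f z = ∑ x ∈ idxS p n r,
      slash2k k (Atop A n x).1 (Atop A n x).2 ((p : ℤ) ^ x.1 * M)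
        ((p : ℤ) ^ (n - x.1) - x.2 * M) f z := by
  rw [idxS, Finset.sum_sigma]
  have hsplit : Finset.Icc r n = insert n (Finset.Icc r (n-1)) := by
    ext m
    simp only [Finset.mem_Icc, Finset.mem_insert]
    omega
  rw [hsplit, Finset.sum_insert (by simp only [Finset.mem_Icc]; omega)]
  have hSn : Sset p n n = {0} := if_pos rfl
  rw [hSn]
  have hterm : ∑ s ∈ ({0} : Finset ℕ),
      slash2k k (Atop A n ⟨n, s⟩).1 (Atop A n ⟨n, s⟩).2 ((p : ℤ) ^ n * M)
        ((p : ℤ) ^ (n - n) - s * M) f z = f z := by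
    rw [Finset.sum_singleton]
    rw [show (Atop A n ⟨n, 0⟩) = (1, 0) from if_pos rfl]
    have hdvd : ((p ^ n * M : ℕ) : ℤ) ∣ (p : ℤ) ^ n * M := by push_cast; exact dvd_rfl
    have hdet : (1 : ℤ) * ((p : ℤ) ^ (n - n) - (0:ℕ) * M) - 0 * ((p : ℤ) ^ n * M) = 1 := by
      simp [Nat.sub_self]
    exact slash_gamma hf hdet hdvd hz
  rw [hterm, Sop]
  congr 1
  apply Finset.sum_congr rfl
  intro j hj
  rw [Finset.mem_Icc] at hj
  have hjn : j ≠ n := by omega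
  rw [show Sset p n j = (Finset.range (p ^ (n - j))).filter (fun s => ¬ p ∣ s) from if_neg hjn]
  apply Finset.sum_congr rfl
  intro s hs
  rw [show (Atop A n ⟨j, s⟩) = A j s from if_neg hjn]

/-- a cusp form of level `p^r M` is a `p^(n-r)`-eigenvector of `Sop`. -/
lemma Sop_eigen (f : ℂ → ℂ) (hf : IsCuspForm (p ^ r * M) k f) {z : ℂ} (hz : z ∈ UHP) :
    Sop p n M k r A f z = (p : ℂ) ^ (n - r) * f z := by
  rw [Sop]
  have hterm : ∀ j ∈ Finset.Icc r (n-1),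
      ∑ s ∈ (Finset.range (p ^ (n - j))).filter (fun s => ¬ p ∣ s),
        slash2k k (A j s).1 (A j s).2 ((p : ℤ) ^ j * M) ((p : ℤ) ^ (n - j) - s * M) f z
      = ((((Finset.range (p ^ (n - j))).filter (fun s => ¬ p ∣ s)).card : ℂ)) * f z := by
    intro j hj
    rw [Finset.mem_Icc] at hj
    have hjr : r ≤ j := hj.1
    have : ∀ s ∈ (Finset.range (p ^ (n - j))).filter (fun s => ¬ p ∣ s),
        slash2k k (A j s).1 (A j s).2 ((p : ℤ) ^ j * M) ((p : ℤ) ^ (n - j) - s * M) f z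
        = f z := by
      intro s hs
      rw [Finset.mem_filter, Finset.mem_range] at hs
      have hdet := hA j s hj.1 hj.2 hs.1 hs.2
      have hdvd : ((p ^ r * M : ℕ) : ℤ) ∣ (p : ℤ) ^ j * M := by
        push_cast
        exact mul_dvd_mul_right (pow_dvd_pow _ hjr) _
      exact slash_gamma hf hdet hdvd hz
    rw [Finset.sum_congr rfl this, Finset.sum_const, nsmul_eq_mul]
  rw [Finset.sum_congr rfl hterm, ← Finset.sum_mul]
  have hc := count_sum (p := p) (n := n) (M := M) (r := r) hp hpM hM hn hr1 hr2
  have hcC : (1 : ℂ) + ∑ j ∈ Finset.Icc r (n-1),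
      ((((Finset.range (p ^ (n - j))).filter (fun s => ¬ p ∣ s)).card : ℂ))
      = (p : ℂ) ^ (n - r) := by
    exact_mod_cast congrArg (Int.cast : ℤ → ℂ) hc
  rw [← hcC]
  ring

lemma Sop_slash_inv (f : ℂ → ℂ) (hf : IsCuspForm (p ^ n * M) k f)
    {a b c d : ℤ} (hdet : a * d - b * c = 1) (hc : ((p ^ r * M : ℕ) : ℤ) ∣ c)
    {z : ℂ} (hz : z ∈ UHP) :
    Sop p n M k r A f (((a : ℂ) * z + b) / ((c : ℂ) * z + d))
      = ((c : ℂ) * z + d) ^ (2 * k) * Sop p n M k r A f z := by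
  have hzim : 0 < z.im := hz
  have hw : (((a : ℂ) * z + b) / ((c : ℂ) * z + d)) ∈ UHP := mobius_mem hdet hz
  have hu : (c : ℂ) * z + d ≠ 0 := denom_ne hdet hzim
  have hcZ : ((p:ℤ)^r * M) ∣ c := by
    have : ((p ^ r * M : ℕ) : ℤ) = (p:ℤ)^r * M := by push_cast; ring
    rwa [this] at hc
  -- bottom rows of B_x * γ
  set C : (_ : ℕ) × ℕ → ℤ := fun x => ((p:ℤ)^x.1 * M) * a + ((p:ℤ)^(n - x.1) - x.2 * M) * c
    with hC
  set D : (_ : ℕ) × ℕ → ℤ := fun x => ((p:ℤ)^x.1 * M) * b + ((p:ℤ)^(n - x.1) - x.2 * M) * d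
    with hD
  have hdetBx : ∀ x ∈ idxS p n r,
      ((Atop A n x).1 * a + (Atop A n x).2 * c) * D x
        - ((Atop A n x).1 * b + (Atop A n x).2 * d) * C x = 1 := by
    intro x hx
    have h1 := detB hp hpM hM hk hn hr1 hr2 hA hx
    have e : ((Atop A n x).1 * a + (Atop A n x).2 * c) * D x
        - ((Atop A n x).1 * b + (Atop A n x).2 * d) * C x
        = ((Atop A n x).1 * ((p : ℤ) ^ (n - x.1) - x.2 * M)
            - (Atop A n x).2 * ((p : ℤ) ^ x.1 * M)) * (a * d - b * c) := by
      rw [hC, hD]; ring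
    rw [e, h1, hdet]; ring
  have hex : ∀ x, x ∈ idxS p n r → ∃ y, y ∈ idxS p n r ∧ ((p:ℤ)^n * M) ∣
      ((p:ℤ)^y.1 * M) * D x - ((p:ℤ)^(n - y.1) - y.2 * M) * C x := by
    intro x hx
    apply key_exists hp hpM hM hn hr1 hr2
    · rw [hC]
      refine dvd_add ?_ ?_
      · rw [mem_idxS] at hx
        exact ((mul_dvd_mul_right (pow_dvd_pow (p:ℤ) hx.1) (M:ℤ))).mul_right a
      · exact hcZ.mul_left _
    · refine ⟨-((Atop A n x).1 * b + (Atop A n x).2 * d),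
        (Atop A n x).1 * a + (Atop A n x).2 * c, ?_⟩
      linear_combination hdetBx x hx
  choose σ hσmem hσcross using hex
  -- each summand transforms into the corresponding term for `σ x`
  have hterm : ∀ x (hx : x ∈ idxS p n r),
      slash2k k (Atop A n x).1 (Atop A n x).2 ((p : ℤ) ^ x.1 * M)
        ((p : ℤ) ^ (n - x.1) - x.2 * M) f (((a : ℂ) * z + b) / ((c : ℂ) * z + d))
      = ((c : ℂ) * z + d) ^ (2 * k) *
        slash2k k (Atop A n (σ x hx)).1 (Atop A n (σ x hx)).2 ((p : ℤ) ^ (σ x hx).1 * M)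
          ((p : ℤ) ^ (n - (σ x hx).1) - (σ x hx).2 * M) f z := by
    intro x hx
    have hdB := detB hp hpM hM hk hn hr1 hr2 hA hx
    have hcc := slash_slash f k (a := a) (b := b) (c := c) (d := d)
      (a' := (Atop A n x).1) (b' := (Atop A n x).2)
      (c' := ((p:ℤ)^x.1 * M)) (d' := ((p:ℤ)^(n - x.1) - x.2 * M)) hdet hdB hzim
    -- hcc : slash γ (slash B f) z = slash (Bγ) f z
    have hBγdet : ((Atop A n x).1 * a + (Atop A n x).2 * c) *
          (((p:ℤ)^x.1 * M) * b + ((p:ℤ)^(n - x.1) - x.2 * M) * d)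
        - ((Atop A n x).1 * b + (Atop A n x).2 * d) *
          (((p:ℤ)^x.1 * M) * a + ((p:ℤ)^(n - x.1) - x.2 * M) * c) = 1 := by
      have := hdetBx x hx
      rw [hC, hD] at this
      linear_combination this
    have hdσ := detB hp hpM hM hk hn hr1 hr2 hA (hσmem x hx)
    have hcross' : ((p ^ n * M : ℕ) : ℤ) ∣
        ((((p:ℤ)^x.1 * M) * a + ((p:ℤ)^(n - x.1) - x.2 * M) * c) *
          ((p:ℤ)^(n - (σ x hx).1) - (σ x hx).2 * M)
        - (((p:ℤ)^x.1 * M) * b + ((p:ℤ)^(n - x.1) - x.2 * M) * d) *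
          ((p:ℤ)^(σ x hx).1 * M)) := by
      have h0 := hσcross x hx
      rw [hC, hD] at h0
      have : ((p ^ n * M : ℕ) : ℤ) = (p:ℤ)^n * M := by push_cast; ring
      rw [this]
      have := dvd_neg.mpr h0
      exact this.trans (dvd_of_eq (by ring))
    have hcoset := slash_coset hf hBγdet hdσ hcross' hz
    have hunfold : slash2k k a b c d (slash2k k (Atop A n x).1 (Atop A n x).2
          ((p:ℤ)^x.1 * M) ((p:ℤ)^(n - x.1) - x.2 * M) f) z
        = ((c:ℂ)*z+d) ^ (-(2*k:ℤ)) * slash2k k (Atop A n x).1 (Atop A n x).2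
          ((p:ℤ)^x.1 * M) ((p:ℤ)^(n - x.1) - x.2 * M) f
          (((a:ℂ) * z + b) / ((c:ℂ) * z + d)) := by
      rw [slash2k]
      simp only [hdet, Int.cast_one, one_pow, one_mul]
    have hone : ((c:ℂ) * z + d) ^ (2 * k) * ((c:ℂ) * z + d) ^ (-(2 * k : ℤ)) = 1 := by
      rw [zpow_neg, ← zpow_natCast ((c:ℂ)*z+d) (2*k)]
      exact mul_inv_cancel₀ (zpow_ne_zero _ hu)
    calc slash2k k (Atop A n x).1 (Atop A n x).2 ((p:ℤ)^x.1 * M)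
          ((p:ℤ)^(n - x.1) - x.2 * M) f (((a:ℂ) * z + b) / ((c:ℂ) * z + d))
        = ((c:ℂ) * z + d) ^ (2 * k) * (((c:ℂ)*z+d) ^ (-(2*k:ℤ)) *
            slash2k k (Atop A n x).1 (Atop A n x).2 ((p:ℤ)^x.1 * M)
            ((p:ℤ)^(n - x.1) - x.2 * M) f (((a:ℂ) * z + b) / ((c:ℂ) * z + d))) := by
          rw [← mul_assoc, hone, one_mul]
      _ = ((c:ℂ) * z + d) ^ (2 * k) * slash2k k a b c d (slash2k k (Atop A n x).1
            (Atop A n x).2 ((p:ℤ)^x.1 * M) ((p:ℤ)^(n - x.1) - x.2 * M) f) z := by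
          rw [hunfold]
      _ = _ := by rw [hcc, hcoset]
  -- reindex the sum
  rw [Sop_eq_sum hp hpM hM hk hn hr1 hr2 hA f hf hw,
    Sop_eq_sum hp hpM hM hk hn hr1 hr2 hA f hf hz, Finset.mul_sum]
  have hinj : ∀ x₁ (hx₁ : x₁ ∈ idxS p n r) x₂ (hx₂ : x₂ ∈ idxS p n r),
      σ x₁ hx₁ = σ x₂ hx₂ → x₁ = x₂ := by
    intro x₁ hx₁ x₂ hx₂ heq
    set y := σ x₁ hx₁ with hy
    have hc₁ := hσcross x₁ hx₁
    have hc₂ := hσcross x₂ hx₂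
    rw [← heq] at hc₂
    -- eliminate to get p^n M ∣ cross of the two transformed rows
    set cy : ℤ := (p:ℤ)^y.1 * M
    set dy : ℤ := (p:ℤ)^(n - y.1) - y.2 * M
    have hdy := detB hp hpM hM hk hn hr1 hr2 hA (hσmem x₁ hx₁)
    have hXd : ((p:ℤ)^n * M) ∣ (C x₁ * D x₂ - C x₂ * D x₁) * dy := by
      have e : (C x₁ * D x₂ - C x₂ * D x₁) * dy
          = D x₁ * (cy * D x₂ - dy * C x₂) - D x₂ * (cy * D x₁ - dy * C x₁) := by ring
      rw [e]
      exact dvd_sub (hc₂.mul_left _) (hc₁.mul_left _)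
    have hXc : ((p:ℤ)^n * M) ∣ (C x₁ * D x₂ - C x₂ * D x₁) * cy := by
      have e : (C x₁ * D x₂ - C x₂ * D x₁) * cy
          = C x₁ * (cy * D x₂ - dy * C x₂) - C x₂ * (cy * D x₁ - dy * C x₁) := by ring
      rw [e]
      exact dvd_sub (hc₂.mul_left _) (hc₁.mul_left _)
    have hX : ((p:ℤ)^n * M) ∣ (C x₁ * D x₂ - C x₂ * D x₁) := by
      have e : C x₁ * D x₂ - C x₂ * D x₁
          = (Atop A n y).1 * ((C x₁ * D x₂ - C x₂ * D x₁) * dy)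
            - (Atop A n y).2 * ((C x₁ * D x₂ - C x₂ * D x₁) * cy) := by
        linear_combination (C x₁ * D x₂ - C x₂ * D x₁) * hdy.symm
      rw [e]
      exact dvd_sub (hXd.mul_left _) (hXc.mul_left _)
    have hXe : C x₁ * D x₂ - C x₂ * D x₁
        = (((p:ℤ)^x₁.1 * M) * ((p:ℤ)^(n - x₂.1) - x₂.2 * M)
          - ((p:ℤ)^x₂.1 * M) * ((p:ℤ)^(n - x₁.1) - x₁.2 * M)) * (a * d - b * c) := by
      rw [hC, hD]; ring
    rw [hXe, hdet, mul_one] at hX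
    exact distinct_cross hp hpM hM hn hr1 hr2 hx₁ hx₂ hX
  refine Finset.sum_bij (fun x hx => σ x hx) hσmem hinj ?_ ?_
  · intro y hy
    obtain ⟨x, hx, hxy⟩ := Finset.surj_on_of_inj_on_of_card_le (s := idxS p n r)
      (t := idxS p n r) (fun x hx => σ x hx) hσmem
      (fun a₁ a₂ ha₁ ha₂ h => hinj a₁ ha₁ a₂ ha₂ h) (le_refl _) y hy
    exact ⟨x, hx, hxy.symm⟩
  · intro x hx
    exact hterm x hx

lemma Sop_holo (f : ℂ → ℂ) (hf : IsCuspForm (p ^ n * M) k f) :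
    DifferentiableOn ℂ (Sop p n M k r A f) UHP := by
  apply DifferentiableOn.add hf.holo
  apply DifferentiableOn.fun_sum
  intro j hj
  apply DifferentiableOn.fun_sum
  intro s hs
  rw [Finset.mem_Icc] at hj
  rw [Finset.mem_filter, Finset.mem_range] at hs
  have hdet := hA j s hj.1 hj.2 hs.1 hs.2
  intro z hz
  have hzim : 0 < z.im := hz
  have hu : ((( (p:ℤ)^j * M : ℤ)):ℂ) * z + (((p:ℤ)^(n-j) - s * M : ℤ):ℂ) ≠ 0 :=
    denom_ne hdet hzim
  have hden : DifferentiableAt ℂ (fun w : ℂ => (((p:ℤ)^j * M : ℤ):ℂ) * w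
      + (((p:ℤ)^(n-j) - s * M : ℤ):ℂ)) z :=
    (differentiableAt_id.const_mul _).add_const _
  have hnum : DifferentiableAt ℂ (fun w : ℂ => (((A j s).1 : ℤ):ℂ) * w
      + (((A j s).2 : ℤ):ℂ)) z :=
    (differentiableAt_id.const_mul _).add_const _
  have hmob : DifferentiableWithinAt ℂ (fun w : ℂ =>
      ((((A j s).1 : ℤ):ℂ) * w + (((A j s).2 : ℤ):ℂ)) /
      ((((p:ℤ)^j * M : ℤ):ℂ) * w + (((p:ℤ)^(n-j) - s * M : ℤ):ℂ))) UHP z :=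
    ((hnum.div hden hu)).differentiableWithinAt
  have hcomp : DifferentiableWithinAt ℂ (fun w : ℂ =>
      f (((((A j s).1 : ℤ):ℂ) * w + (((A j s).2 : ℤ):ℂ)) /
      ((((p:ℤ)^j * M : ℤ):ℂ) * w + (((p:ℤ)^(n-j) - s * M : ℤ):ℂ)))) UHP z := by
    have := DifferentiableWithinAt.comp (t := UHP) z
      (hf.holo _ (mobius_mem hdet hz)) hmob (fun w hw => mobius_mem hdet hw)
    exact this
  have hzpow : DifferentiableWithinAt ℂ (fun w : ℂ =>
      ((((p:ℤ)^j * M : ℤ):ℂ) * w + (((p:ℤ)^(n-j) - s * M : ℤ):ℂ)) ^ (-(2*k:ℤ))) UHP z := by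
    have : DifferentiableAt ℂ (fun w : ℂ =>
        ((((p:ℤ)^j * M : ℤ):ℂ) * w + (((p:ℤ)^(n-j) - s * M : ℤ):ℂ)) ^ (-(2*k:ℤ))) z := by
      have h1 : DifferentiableAt ℂ (fun u : ℂ => u ^ (-(2*k:ℤ)))
          ((((p:ℤ)^j * M : ℤ):ℂ) * z + (((p:ℤ)^(n-j) - s * M : ℤ):ℂ)) :=
        differentiableAt_zpow.mpr (Or.inl hu)
      have := h1.comp z hden
      exact this
    exact this.differentiableWithinAt
  exact ((differentiableWithinAt_const _).mul hzpow).mul hcomp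

lemma Sop_cusps (f : ℂ → ℂ) (hf : IsCuspForm (p ^ n * M) k f) :
    ∀ a b c d : ℤ, a * d - b * c = 1 →
      Tendsto (fun y : ℝ => slash2k k a b c d (Sop p n M k r A f) (y * Complex.I))
        atTop (nhds 0) := by
  intro a b c d hdet
  have hlim : Tendsto (fun y : ℝ => slash2k k a b c d f ((y:ℂ) * Complex.I)
      + ∑ j ∈ Finset.Icc r (n-1), ∑ s ∈ (Finset.range (p ^ (n - j))).filter (fun s => ¬ p ∣ s),
        slash2k k ((A j s).1 * a + (A j s).2 * c) ((A j s).1 * b + (A j s).2 * d)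
          (((p:ℤ)^j * M) * a + ((p:ℤ)^(n-j) - s * M) * c)
          (((p:ℤ)^j * M) * b + ((p:ℤ)^(n-j) - s * M) * d) f ((y:ℂ) * Complex.I))
      atTop (nhds 0) := by
    have h0 := hf.zero_at_cusps a b c d hdet
    have h1 : Tendsto (fun y : ℝ =>
        ∑ j ∈ Finset.Icc r (n-1), ∑ s ∈ (Finset.range (p ^ (n - j))).filter (fun s => ¬ p ∣ s),
          slash2k k ((A j s).1 * a + (A j s).2 * c) ((A j s).1 * b + (A j s).2 * d)
            (((p:ℤ)^j * M) * a + ((p:ℤ)^(n-j) - s * M) * c)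
            (((p:ℤ)^j * M) * b + ((p:ℤ)^(n-j) - s * M) * d) f ((y:ℂ) * Complex.I))
        atTop (nhds 0) := by
      have : Tendsto (fun y : ℝ =>
          ∑ j ∈ Finset.Icc r (n-1), ∑ s ∈ (Finset.range (p ^ (n - j))).filter (fun s => ¬ p ∣ s),
            slash2k k ((A j s).1 * a + (A j s).2 * c) ((A j s).1 * b + (A j s).2 * d)
              (((p:ℤ)^j * M) * a + ((p:ℤ)^(n-j) - s * M) * c)
              (((p:ℤ)^j * M) * b + ((p:ℤ)^(n-j) - s * M) * d) f ((y:ℂ) * Complex.I))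
          atTop (nhds (∑ j ∈ Finset.Icc r (n-1),
            ∑ s ∈ (Finset.range (p ^ (n - j))).filter (fun s => ¬ p ∣ s), (0:ℂ))) := by
        apply tendsto_finset_sum
        intro j hj
        apply tendsto_finset_sum
        intro s hs
        rw [Finset.mem_Icc] at hj
        rw [Finset.mem_filter, Finset.mem_range] at hs
        have hdB := hA j s hj.1 hj.2 hs.1 hs.2
        have hdet2 : ((A j s).1 * a + (A j s).2 * c) * (((p:ℤ)^j * M) * b + ((p:ℤ)^(n-j) - s * M) * d)
            - ((A j s).1 * b + (A j s).2 * d) * (((p:ℤ)^j * M) * a + ((p:ℤ)^(n-j) - s * M) * c) = 1 := by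
          have e : ((A j s).1 * a + (A j s).2 * c) * (((p:ℤ)^j * M) * b + ((p:ℤ)^(n-j) - s * M) * d)
              - ((A j s).1 * b + (A j s).2 * d) * (((p:ℤ)^j * M) * a + ((p:ℤ)^(n-j) - s * M) * c)
              = ((A j s).1 * ((p:ℤ)^(n-j) - s * M) - (A j s).2 * ((p:ℤ)^j * M)) * (a * d - b * c) := by
            ring
          rw [e, hdB, hdet]; ring
        exact hf.zero_at_cusps _ _ _ _ hdet2
      simpa using this
    simpa using h0.add h1
  apply hlim.congr'
  filter_upwards [eventually_gt_atTop (0:ℝ)] with y hy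
  have hzim : 0 < ((y:ℂ) * Complex.I).im := by simpa using hy
  have expand : slash2k k a b c d (Sop p n M k r A f) ((y:ℂ) * Complex.I)
      = slash2k k a b c d f ((y:ℂ) * Complex.I)
      + ∑ j ∈ Finset.Icc r (n-1), ∑ s ∈ (Finset.range (p ^ (n - j))).filter (fun s => ¬ p ∣ s),
        slash2k k a b c d (slash2k k (A j s).1 (A j s).2 ((p:ℤ)^j * M)
          ((p:ℤ)^(n-j) - s * M) f) ((y:ℂ) * Complex.I) := by
    simp only [slash2k, Sop, mul_add, Finset.mul_sum]
  rw [expand]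
  congr 1
  apply Finset.sum_congr rfl
  intro j hj
  apply Finset.sum_congr rfl
  intro s hs
  rw [Finset.mem_Icc] at hj
  rw [Finset.mem_filter, Finset.mem_range] at hs
  have hdB := hA j s hj.1 hj.2 hs.1 hs.2
  exact (slash_slash f k hdet hdB hzim).symm

lemma Sop_cuspform (f : ℂ → ℂ) (hf : IsCuspForm (p ^ n * M) k f) :
    IsCuspForm (p ^ r * M) k (Sop p n M k r A f) := by
  refine ⟨Sop_holo hp hpM hM hk hn hr1 hr2 hA f hf, ?_, Sop_cusps hp hpM hM hk hn hr1 hr2 hA f hf⟩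
  intro a b c d hdet hc z hz
  exact Sop_slash_inv hp hpM hM hk hn hr1 hr2 hA f hf hdet hc hz

end Main

lemma cusp_congr {N k : ℕ} {f g : ℂ → ℂ} (hg : IsCuspForm N k g)
    (hfg : ∀ z ∈ UHP, f z = g z) : IsCuspForm N k f := by
  refine ⟨hg.holo.congr hfg, ?_, ?_⟩
  · intro a b c d hdet hc z hz
    rw [hfg _ (mobius_mem hdet hz), hfg _ hz]
    exact hg.slash_inv a b c d hdet hc z hz
  · intro a b c d hdet
    apply (hg.zero_at_cusps a b c d hdet).congr'
    filter_upwards [eventually_gt_atTop (0:ℝ)] with y hy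
    have hzim : 0 < ((y:ℂ) * Complex.I).im := by simpa using hy
    simp only [slash2k]
    rw [hfg _ (mobius_mem hdet hzim)]

lemma cusp_smul {N k : ℕ} {g : ℂ → ℂ} (c₀ : ℂ) (hg : IsCuspForm N k g) :
    IsCuspForm N k (fun z => c₀ * g z) := by
  refine ⟨hg.holo.const_mul c₀ |>.congr (fun x _ => rfl), ?_, ?_⟩
  · intro a b c d hdet hc z hz
    rw [hg.slash_inv a b c d hdet hc z hz]
    ring
  · intro a b c d hdet
    have := (hg.zero_at_cusps a b c d hdet).const_mul c₀
    rw [mul_zero] at this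
    apply this.congr
    intro y
    simp only [slash2k]
    ring

/-- With `N = pⁿM`, `p ∤ M`, `n ≥ 2`, `1 ≤ r ≤ n`: `S_{pⁿ,r}` maps
`S_{2k}(Γ₀(N))` into `S_{2k}(Γ₀(p^r M))`, satisfies
`S_{pⁿ,r}(S_{pⁿ,r} - p^{n-r}) = 0`, and its `p^{n-r}`-eigenspace is exactly
`S_{2k}(Γ₀(p^r M))`. -/
theorem stmt18 (p n M k r : ℕ) (hp : p.Prime) (hpM : ¬ p ∣ M) (hM : 0 < M)
    (hk : 1 ≤ k) (hn : 2 ≤ n) (hr1 : 1 ≤ r) (hr2 : r ≤ n)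
    (A : ℕ → ℕ → ℤ × ℤ)
    (hA : ∀ j s : ℕ, r ≤ j → j ≤ n - 1 → s < p ^ (n - j) → ¬ p ∣ s →
      (A j s).1 * ((p : ℤ) ^ (n - j) - s * M) - (A j s).2 * ((p : ℤ) ^ j * M) = 1) :
    (∀ f : ℂ → ℂ, IsCuspForm (p ^ n * M) k f →
      IsCuspForm (p ^ r * M) k (Sop p n M k r A f)) ∧
    (∀ f : ℂ → ℂ, IsCuspForm (p ^ n * M) k f →
      ∀ z ∈ UHP, Sop p n M k r A (Sop p n M k r A f) z =
        (p : ℂ) ^ (n - r) * Sop p n M k r A f z) ∧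
    (∀ f : ℂ → ℂ, IsCuspForm (p ^ n * M) k f →
      ((∀ z ∈ UHP, Sop p n M k r A f z = (p : ℂ) ^ (n - r) * f z) ↔
        IsCuspForm (p ^ r * M) k f)) := by
  refine ⟨fun f hf => Sop_cuspform hp hpM hM hk hn hr1 hr2 hA f hf, ?_, ?_⟩
  · intro f hf z hz
    exact Sop_eigen hp hpM hM hk hn hr1 hr2 hA _
      (Sop_cuspform hp hpM hM hk hn hr1 hr2 hA f hf) hz
  · intro f hf
    constructor
    · intro hEig
      have h1 := Sop_cuspform hp hpM hM hk hn hr1 hr2 hA f hf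
      have hpow : ((p:ℂ))^(n-r) ≠ 0 :=
        pow_ne_zero _ (Nat.cast_ne_zero.mpr hp.pos.ne')
      apply cusp_congr (cusp_smul (((p:ℂ)^(n-r))⁻¹) h1)
      intro z hz
      rw [hEig z hz, ← mul_assoc, inv_mul_cancel₀ hpow, one_mul]
    · intro hf' z hz
      exact Sop_eigen hp hpM hM hk hn hr1 hr2 hA f hf' hz
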